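/- Let $G$ be a group, $l \ge 1$, and let $a_1,\dots,a_{2l}$ be elements of $G$ satisfying the braid relations. Set $\gamma_{i+1} = a_i a_{i+1} a_i^{-1}$ and $\bar\gamma_{i+1} = a_i^{-1} a_{i+1} a_i$. Then the sequence $(a_1, a_2, \dots, a_{2l})$ is Hurwitz equivalent to $(\gamma_2, \gamma_4, \dots, \gamma_{2l}, a_1, a_3, \dots, a_{2l-1})$, and the sequence $(a_{2l}, a_{2l-1}, \dots, a_1)$ is Hurwitz equivalent to $(a_{2l-1}, a_{2l-3}, \dots, a_3, a_1, \bar\gamma_{2l}, \bar\gamma_{2l-2}, \dots, \bar\gamma_4, \bar\gamma_2)$. -/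

import Mathlib

/-- One elementary (Hurwitz) transformation of sequences in a group. -/
def HurwitzStep {G : Type*} [Group G] (s t : List G) : Prop :=
  ∃ (l₁ l₂ : List G) (x y : G),
    (s = l₁ ++ x :: y :: l₂ ∧ t = l₁ ++ (x * y * x⁻¹) :: x :: l₂) ∨
    (s = l₁ ++ x :: y :: l₂ ∧ t = l₁ ++ y :: (y⁻¹ * x * y) :: l₂)

/-- Hurwitz equivalence: finitely many elementary transformations. -/
def HurwitzEquiv {G : Type*} [Group G] : List G → List G → Prop :=
  Relation.ReflTransGen HurwitzStep

/-- The sequence `a k, a (k-1), …, a m` (descending indices). -/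
def seqDesc {G : Type*} (a : ℕ → G) (k m : ℕ) : List G :=
  (List.range (k + 1 - m)).map fun i => a (k - i)

/-- The sequence `a m, a (m+1), …, a k` (ascending indices). -/
def seqAsc {G : Type*} (a : ℕ → G) (m k : ℕ) : List G :=
  (List.range (k + 1 - m)).map fun i => a (m + i)

namespace HurwitzAux

variable {G : Type*} [Group G]

lemma step_embed {s t : List G} (h : HurwitzStep s t) (u v : List G) :
    HurwitzStep (u ++ s ++ v) (u ++ t ++ v) := by
  obtain ⟨l₁, l₂, x, y, h⟩ := h
  refine ⟨u ++ l₁, l₂ ++ v, x, y, ?_⟩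
  rcases h with ⟨hs, ht⟩ | ⟨hs, ht⟩
  · left; subst hs; subst ht; simp
  · right; subst hs; subst ht; simp

lemma equiv_embed {s t : List G} (h : HurwitzEquiv s t) (u v : List G) :
    HurwitzEquiv (u ++ s ++ v) (u ++ t ++ v) := by
  induction h with
  | refl => exact Relation.ReflTransGen.refl
  | tail _ hstep ih => exact ih.tail (step_embed hstep u v)

lemma equiv_append {s t s' t' : List G} (h : HurwitzEquiv s t) (h' : HurwitzEquiv s' t') :
    HurwitzEquiv (s ++ s') (t ++ t') := by
  have h1 := equiv_embed h [] s'
  have h2 := equiv_embed h' t []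
  simp only [List.nil_append, List.append_nil] at h1 h2
  exact h1.trans h2

lemma step_symm {s t : List G} (h : HurwitzStep s t) : HurwitzStep t s := by
  obtain ⟨l₁, l₂, x, y, ⟨hs, ht⟩ | ⟨hs, ht⟩⟩ := h
  · refine ⟨l₁, l₂, x * y * x⁻¹, x, Or.inr ⟨ht, ?_⟩⟩
    rw [hs]
    have : x⁻¹ * (x * y * x⁻¹) * x = y := by group
    rw [this]
  · refine ⟨l₁, l₂, y, y⁻¹ * x * y, Or.inl ⟨ht, ?_⟩⟩
    rw [hs]
    have : y * (y⁻¹ * x * y) * y⁻¹ = x := by group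
    rw [this]

lemma equiv_symm {s t : List G} (h : HurwitzEquiv s t) : HurwitzEquiv t s :=
  (@Relation.ReflTransGen.stdSymm _ _ ⟨fun _ _ hh => step_symm hh⟩).symm _ _ h

lemma step1 (x y : G) : HurwitzEquiv [x, y] [x * y * x⁻¹, x] :=
  Relation.ReflTransGen.single ⟨[], [], x, y, Or.inl ⟨rfl, rfl⟩⟩

lemma step2 (x y : G) : HurwitzEquiv [x, y] [y, y⁻¹ * x * y] :=
  Relation.ReflTransGen.single ⟨[], [], x, y, Or.inr ⟨rfl, rfl⟩⟩

lemma swap {x y : G} (h : x * y = y * x) : HurwitzEquiv [x, y] [y, x] := by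
  have e : x * y * x⁻¹ = y := by rw [h]; group
  have := step1 x y
  rwa [e] at this

lemma commute_past (x : G) : ∀ (L : List G), (∀ z ∈ L, x * z = z * x) →
    HurwitzEquiv (x :: L) (L ++ [x])
  | [], _ => Relation.ReflTransGen.refl
  | z :: L, h => by
    have h1 : HurwitzEquiv [x, z] [z, x] := swap (h z (by simp))
    have h2 := equiv_embed h1 [] L
    have h3 := commute_past x L (fun w hw => h w (by simp [hw]))
    have h4 := equiv_embed h3 [z] []
    simp only [List.nil_append, List.append_nil, List.cons_append, List.append_assoc] at h2 h4 ⊢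
    exact h2.trans h4

lemma flatMap_congr (f f' : ℕ → List G) : ∀ n, (∀ j, j < n → HurwitzEquiv (f j) (f' j)) →
    HurwitzEquiv ((List.range n).flatMap f) ((List.range n).flatMap f')
  | 0, _ => Relation.ReflTransGen.refl
  | n + 1, h => by
    rw [List.range_succ, List.flatMap_append, List.flatMap_append]
    refine equiv_append (flatMap_congr f f' n fun j hj => h j (Nat.lt_succ_of_lt hj)) ?_
    simpa using h n (Nat.lt_succ_self n)

lemma sort (g h : ℕ → G) : ∀ n, (∀ j k, j < k → k < n → h j * g k = g k * h j) →
    HurwitzEquiv ((List.range n).flatMap fun j => [g j, h j])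
      ((List.range n).map g ++ (List.range n).map h)
  | 0, _ => Relation.ReflTransGen.refl
  | n + 1, hc => by
    have IH := sort g h n (fun j k hjk hk => hc j k hjk (Nat.lt_succ_of_lt hk))
    have hpast : HurwitzEquiv (g n :: (List.range n).map h)
        ((List.range n).map h ++ [g n]) := by
      refine commute_past (g n) _ (fun z hz => ?_)
      obtain ⟨j, hj, rfl⟩ := List.mem_map.mp hz
      exact (hc j n (List.mem_range.mp hj) (Nat.lt_succ_self n)).symm
    have hpast' := equiv_embed (equiv_symm hpast) ((List.range n).map g) [h n]
    rw [List.range_succ, List.flatMap_append, List.map_append, List.map_append]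
    simp only [List.flatMap_cons, List.flatMap_nil, List.map_cons, List.map_nil,
      List.append_nil, List.append_assoc, List.cons_append, List.nil_append] at hpast' ⊢
    rw [← List.append_assoc] at hpast'
    exact (equiv_append IH (Relation.ReflTransGen.refl)).trans hpast'

lemma asc_eq (a : ℕ → G) : ∀ n, (List.range (2 * n)).map (fun i => a (1 + i)) =
    (List.range n).flatMap fun j => [a (2 * j + 1), a (2 * j + 2)]
  | 0 => rfl
  | n + 1 => by
    have h2 : 2 * (n + 1) = (2 * n + 1) + 1 := by ring
    rw [h2, List.range_succ, List.range_succ, List.range_succ, List.flatMap_append]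
    simp only [List.map_append, List.append_assoc, asc_eq a n, List.flatMap_cons, List.flatMap_nil,
      List.map_cons, List.map_nil, List.append_nil]
    rw [show 1 + 2 * n = 2 * n + 1 from by omega, show 1 + (2 * n + 1) = 2 * n + 2 from by omega]
    simp

lemma desc_eq (a : ℕ → G) (M : ℕ) : ∀ n, (List.range (2 * n)).map (fun i => a (M - i)) =
    (List.range n).flatMap fun j => [a (M - 2 * j), a (M - 2 * j - 1)]
  | 0 => rfl
  | n + 1 => by
    have h2 : 2 * (n + 1) = (2 * n + 1) + 1 := by ring
    rw [h2, List.range_succ, List.range_succ, List.range_succ, List.flatMap_append]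
    simp only [List.map_append, List.append_assoc, desc_eq a M n, List.flatMap_cons, List.flatMap_nil,
      List.map_cons, List.map_nil, List.append_nil]
    rw [show M - (2 * n + 1) = M - 2 * n - 1 from by omega]
    simp

end HurwitzAux

open HurwitzAux in
theorem statement10 {G : Type*} [Group G] (l : ℕ) (hl : 1 ≤ l) (a : ℕ → G)
    (hbraid : ∀ i, 1 ≤ i → i + 1 ≤ 2 * l →
      a i * a (i + 1) * a i = a (i + 1) * a i * a (i + 1))
    (hcomm : ∀ i j, 1 ≤ i → j ≤ 2 * l → i + 2 ≤ j → a i * a j = a j * a i) :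
    HurwitzEquiv (seqAsc a 1 (2 * l))
      (((List.range l).map fun j => a (2 * j + 1) * a (2 * j + 2) * (a (2 * j + 1))⁻¹) ++
        ((List.range l).map fun j => a (2 * j + 1))) ∧
    HurwitzEquiv (seqDesc a (2 * l) 1)
      (((List.range l).map fun j => a (2 * l - 1 - 2 * j)) ++
        ((List.range l).map fun j =>
          (a (2 * l - 2 * j - 1))⁻¹ * a (2 * l - 2 * j) * a (2 * l - 2 * j - 1))) := by
  constructor
  · have e1 : seqAsc a 1 (2 * l) =
        (List.range l).flatMap fun j => [a (2 * j + 1), a (2 * j + 2)] := by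
      rw [seqAsc, show 2 * l + 1 - 1 = 2 * l from by omega, asc_eq]
    rw [e1]
    refine (flatMap_congr _ _ l fun j hj => step1 _ _).trans ?_
    refine sort (fun j => a (2 * j + 1) * a (2 * j + 2) * (a (2 * j + 1))⁻¹)
      (fun j => a (2 * j + 1)) l (fun j k hjk hk => ?_)
    have c1 : Commute (a (2 * j + 1)) (a (2 * k + 1)) :=
      hcomm (2 * j + 1) (2 * k + 1) (by omega) (by omega) (by omega)
    have c2 : Commute (a (2 * j + 1)) (a (2 * k + 2)) :=
      hcomm (2 * j + 1) (2 * k + 2) (by omega) (by omega) (by omega)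
    exact ((c1.mul_right c2).mul_right c1.inv_right).eq
  · have e1 : seqDesc a (2 * l) 1 =
        (List.range l).flatMap fun j => [a (2 * l - 2 * j), a (2 * l - 2 * j - 1)] := by
      rw [seqDesc, show 2 * l + 1 - 1 = 2 * l from by omega, desc_eq]
    rw [e1]
    have e2 : ((List.range l).map fun j => a (2 * l - 1 - 2 * j)) =
        (List.range l).map fun j => a (2 * l - 2 * j - 1) := by
      refine List.map_congr_left fun j hj => ?_
      congr 1; omega
    rw [e2]
    refine (flatMap_congr _ _ l fun j hj => step2 _ _).trans ?_
    refine sort (fun j => a (2 * l - 2 * j - 1))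
      (fun j => (a (2 * l - 2 * j - 1))⁻¹ * a (2 * l - 2 * j) * a (2 * l - 2 * j - 1)) l
      (fun j k hjk hk => ?_)
    have c1 : Commute (a (2 * l - 2 * k - 1)) (a (2 * l - 2 * j - 1)) :=
      hcomm (2 * l - 2 * k - 1) (2 * l - 2 * j - 1) (by omega) (by omega) (by omega)
    have c2 : Commute (a (2 * l - 2 * k - 1)) (a (2 * l - 2 * j)) :=
      hcomm (2 * l - 2 * k - 1) (2 * l - 2 * j) (by omega) (by omega) (by omega)
    exact (((c1.inv_right.mul_right c2).mul_right c1).symm).eq
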